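/- arXiv:2208.02050 — 3 statements merged into one kernel-verified Lean document; each statement's English description precedes it below -/
import Mathlib

section
/- Let a, b, c be nonnegative integers with c ≥ 1, k = a + 2b + 3c. Then the complete k-partite graph G = K_{5⋆(a+1), 2⋆(k−a−1)} (with a+1 partite sets of size 5 and k−a−1 partite sets of size 2) has chromatic number k, |V(G)| = 2k + 3a + 3, and G is not λ-choosable for λ = {1⋆a, 2⋆b, 3⋆c}. -/
open Finset

/-- The set `E` of `a` special colours. -/
def Eset (a : ℕ) (e : Fin a → ℕ) : Finset ℕ := Finset.image e Finset.univ

/-- The set `S_i = {s_{i,1},…,s_{i,6}}`. -/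
def Sset (c : ℕ) (s : Fin c → Fin 6 → ℕ) (i : Fin c) : Finset ℕ :=
  Finset.image (s i) Finset.univ

/-- The set `T_i = {t_{i,1},…,t_{i,4}}`. -/
def Tset (b : ℕ) (t : Fin b → Fin 4 → ℕ) (i : Fin b) : Finset ℕ :=
  Finset.image (t i) Finset.univ

/-- The indices (0-based) of the `s`-colours used in `A_1,…,A_7`. -/
def Aidx : Fin 7 → Finset (Fin 6) :=
  ![{0,2,4}, {0,2,5}, {0,1,3}, {1,2,3}, {1,4,5}, {0,1,2}, {3,4,5}]

/-- The indices (0-based) of the `t`-colours used in `B_1,…,B_7`. -/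
def Bidx : Fin 7 → Finset (Fin 4) :=
  ![{1,2}, {1,3}, {0,1}, {0,2}, {0,3}, {0,1}, {2,3}]

/-- The colour set `A_j` (`j : Fin 7`, 0-based). -/
def Aset (c : ℕ) (s : Fin c → Fin 6 → ℕ) (j : Fin 7) : Finset ℕ :=
  Finset.univ.biUnion fun i => (Aidx j).image (s i)

/-- The colour set `B_j` (`j : Fin 7`, 0-based). -/
def Bset (b : ℕ) (t : Fin b → Fin 4 → ℕ) (j : Fin 7) : Finset ℕ :=
  Finset.univ.biUnion fun i => (Bidx j).image (t i)

/-- The vertex set of `K_{5⋆(a+1), 2⋆(k-a-1)}` with `k = a+2b+3c`: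
`a+1` partite sets `U_i` of size `5` and `k-a-1` partite sets `V_j` of size `2`. -/
abbrev Vtx (a b c : ℕ) :=
  (Fin (a + 1) × Fin 5) ⊕ (Fin (a + 2*b + 3*c - a - 1) × Fin 2)

/-- The list assignment of Lemma `upper lemma 1`:
`L(u_{i,j}) = A_j ∪ B_j ∪ E` and `L(v_{i,j}) = A_{j+5} ∪ B_{j+5} ∪ E`. -/
def Lassign (a b c : ℕ) (s : Fin c → Fin 6 → ℕ) (t : Fin b → Fin 4 → ℕ)
    (e : Fin a → ℕ) : Vtx a b c → Finset ℕ
  | Sum.inl (_, j) =>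
      Aset c s (Fin.castLE (by norm_num) j) ∪ Bset b t (Fin.castLE (by norm_num) j) ∪ Eset a e
  | Sum.inr (_, j) =>
      Aset c s ⟨j.1 + 5, by omega⟩ ∪ Bset b t ⟨j.1 + 5, by omega⟩ ∪ Eset a e

/-- The partite set containing a vertex. -/
def partOf (a b c : ℕ) : Vtx a b c → Fin (a + 1) ⊕ Fin (a + 2*b + 3*c - a - 1) :=
  Sum.map Prod.fst Prod.fst

/-- The complete multipartite graph `K_{5⋆(a+1), 2⋆(k-a-1)}`. -/
def Gmp (a b c : ℕ) : SimpleGraph (Vtx a b c) :=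
  SimpleGraph.fromRel fun x y => partOf a b c x ≠ partOf a b c y

/-- `f` is a proper colouring of `G` from the lists `L`. -/
def ProperLC {V : Type*} (G : SimpleGraph V) (L : V → Finset ℕ) (f : V → ℕ) : Prop :=
  (∀ v, f v ∈ L v) ∧ ∀ ⦃u v⦄, G.Adj u v → f u ≠ f v

/-- `L` is a `λ`-list assignment for `λ` given as the list `lam`: the colour
set can be partitioned into pairwise disjoint classes `C₁,…,C_q` with
`|L(v) ∩ C_i| ≥ k_i` for every vertex `v` and every `i`. -/
def LamAssignment {V : Type*} (lam : List ℕ) (L : V → Finset ℕ) : Prop :=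
  ∃ C : List (Finset ℕ), C.Pairwise Disjoint ∧
    (∀ v, L v ⊆ C.foldr (· ∪ ·) ∅) ∧
    List.Forall₂ (fun k Ci => ∀ v, k ≤ ((L v) ∩ Ci).card) lam C

/-- `G` is `λ`-choosable. -/
def LamChoosable {V : Type*} (G : SimpleGraph V) (lam : List ℕ) : Prop :=
  ∀ L : V → Finset ℕ, LamAssignment lam L → ∃ f, ProperLC G L f

/-- `G` is `k`-choosable. -/
def Choosable {V : Type*} (G : SimpleGraph V) (k : ℕ) : Prop :=
  ∀ L : V → Finset ℕ, (∀ v, k ≤ (L v).card) → ∃ f, ProperLC G L f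

def eF (a : ℕ) : Fin a → ℕ := fun i => i
def tF (a b : ℕ) : Fin b → Fin 4 → ℕ := fun i j => a + 4*i + j
def sF (a b c : ℕ) : Fin c → Fin 6 → ℕ := fun i j => a + 4*b + 6*i + j
def LL (a b c : ℕ) : Vtx a b c → Finset ℕ := Lassign a b c (sF a b c) (tF a b) (eF a)

lemma mem_foldr_union (l : List (Finset ℕ)) (x : ℕ) :
    x ∈ l.foldr (· ∪ ·) ∅ ↔ ∃ s ∈ l, x ∈ s := by
  induction l with
  | nil => simp
  | cons h t ih => simp [ih]

lemma forall₂_replicate_ofFn {P : ℕ → Finset ℕ → Prop} :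
    ∀ {n : ℕ} {x : ℕ} {g : Fin n → Finset ℕ}, (∀ i, P x (g i)) →
      List.Forall₂ P (List.replicate n x) (List.ofFn g) := by
  intro n
  induction n with
  | zero => intro x g h; simp
  | succ n ih =>
    intro x g h
    rw [List.replicate_succ, List.ofFn_succ]
    exact List.Forall₂.cons (h 0) (ih fun i => h i.succ)

lemma card_Bidx : ∀ j : Fin 7, (Bidx j).card = 2 := by decide
lemma card_Aidx : ∀ j : Fin 7, (Aidx j).card = 3 := by decide

lemma mem_LL (a b c : ℕ) (v : Vtx a b c) (x : ℕ) :
    x ∈ LL a b c v ↔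
      ∃ j : Fin 7, ((v.elim (fun p => (p.2 : ℕ)) (fun p => p.2 + 5)) = (j : ℕ)) ∧
      ((∃ ic : Fin c, ∃ jc ∈ Aidx j, x = a + 4*b + 6*ic + jc) ∨
       (∃ ib : Fin b, ∃ jb ∈ Bidx j, x = a + 4*ib + jb) ∨
       (∃ ia : Fin a, x = (ia : ℕ))) := by
  rcases v with ⟨i0, j0⟩ | ⟨i0, j0⟩ <;>
    simp only [LL, Lassign, Aset, Bset, Eset, Sum.elim_inl, Sum.elim_inr,
      mem_union, mem_biUnion, mem_image, mem_univ, true_and, sF, tF, eF]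
  · constructor
    · intro h
      exact ⟨Fin.castLE (by norm_num) j0, rfl, by
        rcases h with (⟨i,hi⟩|⟨i,hi⟩)|⟨i,hi⟩
        · exact Or.inl ⟨i, by aesop⟩
        · exact Or.inr (Or.inl ⟨i, by aesop⟩)
        · exact Or.inr (Or.inr ⟨i, hi.symm⟩)⟩
    · rintro ⟨j, hj, h⟩
      have : (Fin.castLE (by norm_num : 5 ≤ 7) j0) = j := by
        apply Fin.ext; simpa using hj
      subst this
      rcases h with ⟨i,jc,hjc,rfl⟩|⟨i,jb,hjb,rfl⟩|⟨i,rfl⟩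
      · exact Or.inl (Or.inl ⟨i, jc, hjc, rfl⟩)
      · exact Or.inl (Or.inr ⟨i, jb, hjb, rfl⟩)
      · exact Or.inr ⟨i, rfl⟩
  · constructor
    · intro h
      exact ⟨⟨j0.1 + 5, by omega⟩, rfl, by
        rcases h with (⟨i,hi⟩|⟨i,hi⟩)|⟨i,hi⟩
        · exact Or.inl ⟨i, by aesop⟩
        · exact Or.inr (Or.inl ⟨i, by aesop⟩)
        · exact Or.inr (Or.inr ⟨i, hi.symm⟩)⟩
    · rintro ⟨j, hj, h⟩
      have : (⟨j0.1 + 5, by omega⟩ : Fin 7) = j := by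
        apply Fin.ext; simpa using hj
      rw [← this] at h
      rcases h with ⟨i,jc,hjc,rfl⟩|⟨i,jb,hjb,rfl⟩|⟨i,rfl⟩
      · exact Or.inl (Or.inl ⟨i, jc, hjc, rfl⟩)
      · exact Or.inl (Or.inr ⟨i, jb, hjb, rfl⟩)
      · exact Or.inr ⟨i, rfl⟩

lemma LL_eq (a b c : ℕ) (v : Vtx a b c) :
    ∃ j : Fin 7, LL a b c v =
      Aset c (sF a b c) j ∪ Bset b (tF a b) j ∪ Eset a (eF a) := by
  rcases v with ⟨i0, j0⟩ | ⟨i0, j0⟩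
  · exact ⟨_, rfl⟩
  · exact ⟨_, rfl⟩

lemma lamA (a b c : ℕ) :
    LamAssignment (List.replicate a 1 ++ List.replicate b 2 ++ List.replicate c 3)
      (LL a b c) := by
  refine ⟨(List.ofFn fun i : Fin a => ({(i : ℕ)} : Finset ℕ)) ++
      (List.ofFn fun i : Fin b => Tset b (tF a b) i) ++
      (List.ofFn fun i : Fin c => Sset c (sF a b c) i), ?_, ?_, ?_⟩
  · rw [List.pairwise_append, List.pairwise_append]
    refine ⟨⟨List.pairwise_ofFn.2 fun i j hij => ?_, List.pairwise_ofFn.2 fun i j hij => ?_,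
        fun X hX Y hY => ?_⟩, List.pairwise_ofFn.2 fun i j hij => ?_, fun X hX Y hY => ?_⟩
    · simp only [Finset.disjoint_singleton]
      omega
    · rw [Finset.disjoint_left]
      simp only [Tset, mem_image, mem_univ, true_and, tF]
      rintro x ⟨p, rfl⟩ ⟨q, hq⟩
      have := p.isLt; have := q.isLt
      have hij' : (i : ℕ) < j := hij
      omega
    · simp only [List.mem_ofFn, Set.mem_range] at hX hY
      obtain ⟨i, rfl⟩ := hX; obtain ⟨j, rfl⟩ := hY
      rw [Finset.disjoint_left]
      simp only [Tset, mem_singleton, mem_image, mem_univ, true_and, tF]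
      rintro x rfl ⟨q, hq⟩
      have := i.isLt; have := q.isLt
      omega
    · rw [Finset.disjoint_left]
      simp only [Sset, mem_image, mem_univ, true_and, sF]
      rintro x ⟨p, rfl⟩ ⟨q, hq⟩
      have := p.isLt; have := q.isLt
      have hij' : (i : ℕ) < j := hij
      omega
    · simp only [List.mem_append, List.mem_ofFn, Set.mem_range] at hX hY
      obtain ⟨j, rfl⟩ := hY
      rcases hX with ⟨i, rfl⟩ | ⟨i, rfl⟩ <;> rw [Finset.disjoint_left] <;>
        simp only [Sset, Tset, mem_singleton, mem_image, mem_univ, true_and, sF, tF]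
      · rintro x rfl ⟨q, hq⟩
        have := i.isLt; have := q.isLt
        omega
      · rintro x ⟨p, rfl⟩ ⟨q, hq⟩
        have := p.isLt; have := q.isLt
        omega
  · intro v x hx
    rw [mem_foldr_union]
    rw [mem_LL] at hx
    obtain ⟨j, -, hx⟩ := hx
    rcases hx with ⟨ic, jc, hjc, rfl⟩ | ⟨ib, jb, hjb, rfl⟩ | ⟨ia, rfl⟩
    · refine ⟨Sset c (sF a b c) ic, ?_, ?_⟩
      · simp [List.mem_append, List.mem_ofFn]
      · simp only [Sset, mem_image, mem_univ, true_and]; exact ⟨jc, rfl⟩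
    · refine ⟨Tset b (tF a b) ib, ?_, ?_⟩
      · simp [List.mem_append, List.mem_ofFn]
      · simp only [Tset, mem_image, mem_univ, true_and]; exact ⟨jb, rfl⟩
    · refine ⟨{(ia : ℕ)}, ?_, by simp⟩
      · simp [List.mem_append, List.mem_ofFn]
  · refine List.rel_append (List.rel_append ?_ ?_) ?_
    · refine forall₂_replicate_ofFn fun i v => ?_
      have h1 : (i : ℕ) ∈ LL a b c v ∩ {(i : ℕ)} := by
        rw [mem_inter]
        obtain ⟨j, hj⟩ := LL_eq a b c v
        refine ⟨?_, by simp⟩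
        rw [hj]
        exact mem_union_right _ (mem_image_of_mem _ (mem_univ i))
      exact Finset.card_pos.2 ⟨_, h1⟩
    · refine forall₂_replicate_ofFn fun i v => ?_
      obtain ⟨j, hj⟩ := LL_eq a b c v
      have hsub : (Bidx j).image (tF a b i) ⊆ LL a b c v ∩ Tset b (tF a b) i := by
        intro x hx
        simp only [mem_image] at hx
        obtain ⟨jb, hjb, rfl⟩ := hx
        rw [mem_inter, hj]
        constructor
        · exact mem_union_left _ (mem_union_right _ (mem_biUnion.2 ⟨i, mem_univ _, mem_image_of_mem _ hjb⟩))
        · exact mem_image_of_mem _ (mem_univ jb)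
      calc 2 = ((Bidx j).image (tF a b i)).card := by
                rw [Finset.card_image_of_injOn, card_Bidx]
                intro p _ q _ h
                have := p.isLt; have := q.isLt
                simp only [tF] at h
                exact Fin.ext (by omega)
        _ ≤ _ := Finset.card_le_card hsub
    · refine forall₂_replicate_ofFn fun i v => ?_
      obtain ⟨j, hj⟩ := LL_eq a b c v
      have hsub : (Aidx j).image (sF a b c i) ⊆ LL a b c v ∩ Sset c (sF a b c) i := by
        intro x hx
        simp only [mem_image] at hx
        obtain ⟨jc, hjc, rfl⟩ := hx
        rw [mem_inter, hj]
        constructor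
        · exact mem_union_left _ (mem_union_left _ (mem_biUnion.2 ⟨i, mem_univ _, mem_image_of_mem _ hjc⟩))
        · exact mem_image_of_mem _ (mem_univ jc)
      calc 3 = ((Aidx j).image (sF a b c i)).card := by
                rw [Finset.card_image_of_injOn, card_Aidx]
                intro p _ q _ h
                have := p.isLt; have := q.isLt
                simp only [sF] at h
                exact Fin.ext (by omega)
        _ ≤ _ := Finset.card_le_card hsub

def hits (d : Fin 6 ⊕ Fin 4) (r : Fin 5) : Prop :=
  match d with
  | Sum.inl j => j ∈ Aidx (Fin.castLE (by norm_num) r)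
  | Sum.inr j => j ∈ Bidx (Fin.castLE (by norm_num) r)

instance : ∀ d r, Decidable (hits d r) := by
  intro d r; rcases d with j | j <;> simp [hits] <;> infer_instance

def goodIdx (d : Fin 6 ⊕ Fin 4) : Prop :=
  match d with
  | Sum.inl j => (j : ℕ) < 3
  | Sum.inr j => (j : ℕ) < 2

instance : ∀ d, Decidable (goodIdx d) := by
  intro d; rcases d with j | j <;> dsimp only [goodIdx] <;> infer_instance

lemma cover1 : ∀ d, ¬ ∀ r : Fin 5, hits d r := by decide

lemma cover2 : ∀ d1 d2, (∀ r : Fin 5, hits d1 r ∨ hits d2 r) → goodIdx d1 ∧ goodIdx d2 := by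
  decide

lemma idxA5 : ∀ j : Fin 6, j ∈ Aidx 5 → (j : ℕ) < 3 := by decide
lemma idxB5 : ∀ j : Fin 4, j ∈ Bidx 5 → (j : ℕ) < 2 := by decide

def wt (a : ℕ) (x : ℕ) : ℕ := if x < a then 2 else 1

lemma wt_pos (a x : ℕ) : 1 ≤ wt a x := by unfold wt; split <;> omega

lemma sum_wt (a K : ℕ) : (Finset.range (a + K)).sum (wt a) = 2*a + K := by
  induction K with
  | zero =>
    have : ∀ x ∈ Finset.range (a+0), wt a x = 2 := by
      intro x hx; rw [Finset.mem_range] at hx; unfold wt; rw [if_pos (by omega)]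
    rw [Finset.sum_congr rfl this, Finset.sum_const, Finset.card_range, smul_eq_mul]; omega
  | succ K ih =>
    have : a + (K+1) = (a+K) + 1 := by omega
    rw [this, Finset.sum_range_succ, ih]
    unfold wt
    rw [if_neg (by omega)]
    omega

def Cs (a b c : ℕ) (f : Vtx a b c → ℕ) :
    (Fin (a+1) ⊕ Fin (a + 2*b + 3*c - a - 1)) → Finset ℕ
  | Sum.inl i => Finset.image (fun j : Fin 5 => f (Sum.inl (i, j))) Finset.univ
  | Sum.inr i => Finset.image (fun j : Fin 2 => f (Sum.inr (i, j))) Finset.univ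

lemma mem_Cs (a b c : ℕ) (f : Vtx a b c → ℕ) (p) (x : ℕ) :
    x ∈ Cs a b c f p ↔ ∃ u, partOf a b c u = p ∧ f u = x := by
  rcases p with i | i <;>
    simp only [Cs, Finset.mem_image, Finset.mem_univ, true_and]
  · constructor
    · rintro ⟨j, rfl⟩; exact ⟨Sum.inl (i, j), rfl, rfl⟩
    · rintro ⟨u, hu, rfl⟩
      rcases u with ⟨i', j⟩ | ⟨i', j⟩ <;> simp [partOf] at hu
      subst hu; exact ⟨j, rfl⟩
  · constructor
    · rintro ⟨j, rfl⟩; exact ⟨Sum.inr (i, j), rfl, rfl⟩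
    · rintro ⟨u, hu, rfl⟩
      rcases u with ⟨i', j⟩ | ⟨i', j⟩ <;> simp [partOf] at hu
      subst hu; exact ⟨j, rfl⟩

lemma idxA6 : ∀ j : Fin 6, j ∈ Aidx 6 → 3 ≤ (j : ℕ) := by decide
lemma idxB6 : ∀ j : Fin 4, j ∈ Bidx 6 → 2 ≤ (j : ℕ) := by decide

lemma decomp_big (a b c : ℕ) (f : Vtx a b c → ℕ) (hmem : ∀ v, f v ∈ LL a b c v)
    (i : Fin (a+1)) (r : Fin 5) :
    (∃ ia : Fin a, f (Sum.inl (i,r)) = (ia:ℕ)) ∨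
    (∃ ic : Fin c, ∃ jc : Fin 6, jc ∈ Aidx (Fin.castLE (by norm_num) r) ∧
        f (Sum.inl (i,r)) = a+4*b+6*ic+jc) ∨
    (∃ ib : Fin b, ∃ jb : Fin 4, jb ∈ Bidx (Fin.castLE (by norm_num) r) ∧
        f (Sum.inl (i,r)) = a+4*ib+jb) := by
  have h := hmem (Sum.inl (i,r))
  rw [mem_LL] at h
  obtain ⟨j, hj, hcases⟩ := h
  have hjr : j = Fin.castLE (by norm_num) r := by
    apply Fin.ext; simpa using hj.symm
  rw [hjr] at hcases
  rcases hcases with ⟨ic,jc,hm,he⟩|⟨ib,jb,hm,he⟩|⟨ia,he⟩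
  · exact Or.inr (Or.inl ⟨ic,jc,hm,he⟩)
  · exact Or.inr (Or.inr ⟨ib,jb,hm,he⟩)
  · exact Or.inl ⟨ia,he⟩

lemma decomp_small (a b c : ℕ) (f : Vtx a b c → ℕ) (hmem : ∀ v, f v ∈ LL a b c v)
    (i : Fin (a + 2*b + 3*c - a - 1)) (q : Fin 2) :
    (∃ ia : Fin a, f (Sum.inr (i,q)) = (ia:ℕ)) ∨
    (∃ ic : Fin c, ∃ jc : Fin 6, jc ∈ Aidx ⟨q.1+5, by omega⟩ ∧
        f (Sum.inr (i,q)) = a+4*b+6*ic+jc) ∨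
    (∃ ib : Fin b, ∃ jb : Fin 4, jb ∈ Bidx ⟨q.1+5, by omega⟩ ∧
        f (Sum.inr (i,q)) = a+4*ib+jb) := by
  have h := hmem (Sum.inr (i,q))
  rw [mem_LL] at h
  obtain ⟨j, hj, hcases⟩ := h
  have hjr : j = ⟨q.1+5, by omega⟩ := by
    apply Fin.ext; simpa using hj.symm
  rw [hjr] at hcases
  rcases hcases with ⟨ic,jc,hm,he⟩|⟨ib,jb,hm,he⟩|⟨ia,he⟩
  · exact Or.inr (Or.inl ⟨ic,jc,hm,he⟩)
  · exact Or.inr (Or.inr ⟨ib,jb,hm,he⟩)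
  · exact Or.inl ⟨ia,he⟩

lemma hrange (a b c : ℕ) (f : Vtx a b c → ℕ) (hmem : ∀ v, f v ∈ LL a b c v)
    (v : Vtx a b c) : f v < a + 4*b + 6*c := by
  have h := hmem v
  rw [mem_LL] at h
  obtain ⟨j, -, hcases⟩ := h
  rcases hcases with ⟨ic, jc, -, h⟩ | ⟨ib, jb, -, h⟩ | ⟨ia, h⟩ <;>
    [have := ic.isLt; have := ib.isLt; have := ia.isLt] <;>
    [have := jc.isLt; have := jb.isLt; skip] <;> omega

lemma decomp_small0 (a b c : ℕ) (f : Vtx a b c → ℕ) (hmem : ∀ v, f v ∈ LL a b c v)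
    (i : Fin (a + 2*b + 3*c - a - 1)) :
    (∃ ia : Fin a, f (Sum.inr (i,0)) = (ia:ℕ)) ∨
    (∃ ic : Fin c, ∃ jc : Fin 6, jc ∈ Aidx 5 ∧ f (Sum.inr (i,0)) = a+4*b+6*ic+jc) ∨
    (∃ ib : Fin b, ∃ jb : Fin 4, jb ∈ Bidx 5 ∧ f (Sum.inr (i,0)) = a+4*ib+jb) := by
  have h := decomp_small a b c f hmem i 0
  have e : (⟨(0:Fin 2).1+5, by omega⟩ : Fin 7) = 5 := by decide
  rw [e] at h
  exact h

lemma decomp_small1 (a b c : ℕ) (f : Vtx a b c → ℕ) (hmem : ∀ v, f v ∈ LL a b c v)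
    (i : Fin (a + 2*b + 3*c - a - 1)) :
    (∃ ia : Fin a, f (Sum.inr (i,1)) = (ia:ℕ)) ∨
    (∃ ic : Fin c, ∃ jc : Fin 6, jc ∈ Aidx 6 ∧ f (Sum.inr (i,1)) = a+4*b+6*ic+jc) ∨
    (∃ ib : Fin b, ∃ jb : Fin 4, jb ∈ Bidx 6 ∧ f (Sum.inr (i,1)) = a+4*ib+jb) := by
  have h := decomp_small a b c f hmem i 1
  have e : (⟨(1:Fin 2).1+5, by omega⟩ : Fin 7) = 6 := by decide
  rw [e] at h
  exact h

lemma two_le_sum_of_mem {s : Finset ℕ} {a x : ℕ} (hx : x ∈ s) (h2 : wt a x = 2) :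
    2 ≤ s.sum (wt a) := by
  calc 2 = wt a x := h2.symm
    _ ≤ s.sum (wt a) := Finset.single_le_sum (fun i _ => Nat.zero_le _) hx

lemma two_le_sum_of_two_mem {s : Finset ℕ} {a x y : ℕ} (hx : x ∈ s) (hy : y ∈ s)
    (hxy : x ≠ y) : 2 ≤ s.sum (wt a) := by
  have hsub : {x, y} ⊆ s := by
    intro z hz; rcases Finset.mem_insert.1 hz with rfl | hz
    · exact hx
    · rwa [Finset.mem_singleton.1 hz]
  calc 2 = 1 + 1 := rfl
    _ ≤ wt a x + wt a y := Nat.add_le_add (wt_pos a x) (wt_pos a y)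
    _ = ({x, y} : Finset ℕ).sum (wt a) := (Finset.sum_pair hxy).symm
    _ ≤ s.sum (wt a) := Finset.sum_le_sum_of_subset hsub

lemma hge2 (a b c : ℕ) (f : Vtx a b c → ℕ) (hmem : ∀ v, f v ∈ LL a b c v) :
    ∀ p, 2 ≤ (Cs a b c f p).sum (wt a) := by
  intro p
  rcases p with i | i
  · -- big part
    by_cases hE : ∃ r : Fin 5, f (Sum.inl (i,r)) < a
    · obtain ⟨r, hr⟩ := hE
      refine two_le_sum_of_mem (x := f (Sum.inl (i,r))) ?_ (if_pos hr)
      simp only [Cs, Finset.mem_image, Finset.mem_univ, true_and]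
      exact ⟨r, rfl⟩
    · push_neg at hE
      have hne : ∃ r : Fin 5, f (Sum.inl (i,r)) ≠ f (Sum.inl (i,0)) := by
        by_contra hall
        push_neg at hall
        rcases decomp_big a b c f hmem i 0 with ⟨ia, he0⟩ | ⟨ic, jc, hm0, he0⟩ |
            ⟨ib, jb, hm0, he0⟩
        · have := ia.isLt; have := hE 0; omega
        · apply cover1 (Sum.inl jc)
          intro r
          rcases decomp_big a b c f hmem i r with ⟨ia, he⟩ | ⟨ic', jc', hm, he⟩ |
              ⟨ib', jb', hm, he⟩
          · have := ia.isLt; have := hE r; omega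
          · rw [hall r] at he
            have h6 := jc.isLt; have h6' := jc'.isLt
            have : jc' = jc := Fin.ext (by omega)
            rw [this] at hm
            exact hm
          · rw [hall r] at he
            have := jc.isLt; have := jb'.isLt; have := ib'.isLt; have := ic.isLt
            omega
        · apply cover1 (Sum.inr jb)
          intro r
          rcases decomp_big a b c f hmem i r with ⟨ia, he⟩ | ⟨ic', jc', hm, he⟩ |
              ⟨ib', jb', hm, he⟩
          · have := ia.isLt; have := hE r; omega
          · rw [hall r] at he
            have := jc'.isLt; have := jb.isLt; have := ib.isLt; have := ic'.isLt
            omega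
          · rw [hall r] at he
            have h4 := jb.isLt; have h4' := jb'.isLt; have := ib.isLt; have := ib'.isLt
            have : jb' = jb := Fin.ext (by omega)
            rw [this] at hm
            exact hm
      obtain ⟨r, hr⟩ := hne
      refine two_le_sum_of_two_mem (x := f (Sum.inl (i,r))) (y := f (Sum.inl (i,0))) ?_ ?_ hr <;>
        simp only [Cs, Finset.mem_image, Finset.mem_univ, true_and]
      · exact ⟨r, rfl⟩
      · exact ⟨0, rfl⟩
  · -- small part
    by_cases hE : ∃ q : Fin 2, f (Sum.inr (i,q)) < a
    · obtain ⟨q, hq⟩ := hE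
      refine two_le_sum_of_mem (x := f (Sum.inr (i,q))) ?_ (if_pos hq)
      simp only [Cs, Finset.mem_image, Finset.mem_univ, true_and]
      exact ⟨q, rfl⟩
    · push_neg at hE
      have hne : f (Sum.inr (i,0)) ≠ f (Sum.inr (i,1)) := by
        intro heq
        rcases decomp_small0 a b c f hmem i with ⟨ia, he0⟩ | ⟨ic, jc, hm0, he0⟩ |
            ⟨ib, jb, hm0, he0⟩
        · have := ia.isLt; have := hE 0; omega
        · rcases decomp_small1 a b c f hmem i with ⟨ia, he1⟩ | ⟨ic', jc', hm1, he1⟩ |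
              ⟨ib', jb', hm1, he1⟩
          · have := ia.isLt; have := hE 1; omega
          · have h5 := idxA5 jc hm0; have h6 := idxA6 jc' hm1
            have := jc.isLt; have := jc'.isLt
            omega
          · have := jc.isLt; have := jb'.isLt; have := ib'.isLt; have := ic.isLt
            omega
        · rcases decomp_small1 a b c f hmem i with ⟨ia, he1⟩ | ⟨ic', jc', hm1, he1⟩ |
              ⟨ib', jb', hm1, he1⟩
          · have := ia.isLt; have := hE 1; omega
          · have := jc'.isLt; have := jb.isLt; have := ib.isLt; have := ic'.isLt
            omega
          · have h5 := idxB5 jb hm0; have h6 := idxB6 jb' hm1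
            have := jb.isLt; have := jb'.isLt
            omega
      refine two_le_sum_of_two_mem (x := f (Sum.inr (i,0))) (y := f (Sum.inr (i,1))) ?_ ?_ hne <;>
        simp only [Cs, Finset.mem_image, Finset.mem_univ, true_and]
      · exact ⟨0, rfl⟩
      · exact ⟨1, rfl⟩

def reprD (a b c : ℕ) (w : ℕ) : (Fin 6 ⊕ Fin 4) → Prop
  | Sum.inl jc => ∃ ic : Fin c, w = a+4*b+6*ic+jc
  | Sum.inr jb => ∃ ib : Fin b, w = a+4*ib+jb

lemma hit_of_eq (a b c : ℕ) (f : Vtx a b c → ℕ) (hmem : ∀ v, f v ∈ LL a b c v)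
    (i : Fin (a+1)) (r : Fin 5) (w : ℕ) (d : Fin 6 ⊕ Fin 4)
    (hd : reprD a b c w d) (hw : a ≤ w) (he : f (Sum.inl (i,r)) = w) : hits d r := by
  rcases decomp_big a b c f hmem i r with ⟨ia,h⟩|⟨ic',jc',hm,h⟩|⟨ib',jb',hm,h⟩
  · have := ia.isLt; omega
  · rcases d with jc | jb
    · obtain ⟨ic, hic⟩ := hd
      have := jc.isLt; have := jc'.isLt; have := ic.isLt; have := ic'.isLt
      have hjj : jc' = jc := Fin.ext (by omega)
      show jc ∈ Aidx _
      rw [← hjj]; exact hm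
    · obtain ⟨ib, hib⟩ := hd
      have := jc'.isLt; have := jb.isLt; have := ib.isLt; have := ic'.isLt
      omega
  · rcases d with jc | jb
    · obtain ⟨ic, hic⟩ := hd
      have := jc.isLt; have := jb'.isLt; have := ib'.isLt; have := ic.isLt
      omega
    · obtain ⟨ib, hib⟩ := hd
      have := jb.isLt; have := jb'.isLt; have := ib.isLt; have := ib'.isLt
      have hjj : jb' = jb := Fin.ext (by omega)
      show jb ∈ Bidx _
      rw [← hjj]; exact hm

lemma exists_repr (a b c : ℕ) (f : Vtx a b c → ℕ) (hmem : ∀ v, f v ∈ LL a b c v)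
    (i : Fin (a+1)) (r : Fin 5) (w : ℕ) (hw : a ≤ w) (he : f (Sum.inl (i,r)) = w) :
    ∃ d, reprD a b c w d := by
  rcases decomp_big a b c f hmem i r with ⟨ia,h⟩|⟨ic',jc',hm,h⟩|⟨ib',jb',hm,h⟩
  · have := ia.isLt; omega
  · exact ⟨Sum.inl jc', ic', by omega⟩
  · exact ⟨Sum.inr jb', ib', by omega⟩

def isY (a b c : ℕ) (x : ℕ) : Prop :=
  (∃ ib : Fin b, ∃ jb : Fin 4, 2 ≤ (jb:ℕ) ∧ x = a+4*ib+jb) ∨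
  (∃ ic : Fin c, ∃ jc : Fin 6, 3 ≤ (jc:ℕ) ∧ x = a+4*b+6*ic+jc)

lemma hYbig (a b c : ℕ) (f : Vtx a b c → ℕ) (hmem : ∀ v, f v ∈ LL a b c v)
    (i : Fin (a+1)) (h2 : (Cs a b c f (Sum.inl i)).sum (wt a) = 2)
    (x : ℕ) (hx : x ∈ Cs a b c f (Sum.inl i)) (hY : isY a b c x) : False := by
  have hxa : a ≤ x := by
    rcases hY with ⟨ib,jb,hb,rfl⟩|⟨ic,jc,hb,rfl⟩ <;> omega
  have hwx : wt a x = 1 := if_neg (by omega)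
  have hsplit := Finset.add_sum_erase (Cs a b c f (Sum.inl i)) (wt a) hx
  have herase : ∑ y ∈ (Cs a b c f (Sum.inl i)).erase x, wt a y = 1 := by
    rw [← hsplit, hwx] at h2
    omega
  have hne' : (Cs a b c f (Sum.inl i)).erase x ≠ ∅ := by
    intro h
    rw [h] at herase
    simp at herase
  obtain ⟨z, hz⟩ := Finset.nonempty_of_ne_empty hne'
  have hwz : wt a z = 1 := by
    have h1 := Finset.single_le_sum (f := wt a) (fun _ _ => Nat.zero_le _) hz
    rw [herase] at h1
    have h2' := wt_pos a z
    omega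
  have hza : a ≤ z := by
    by_contra h
    have h2z : wt a z = 2 := if_pos (by omega)
    omega
  have hcard1 : ((Cs a b c f (Sum.inl i)).erase x).card = 1 := by
    have hle := Finset.card_nsmul_le_sum ((Cs a b c f (Sum.inl i)).erase x) (wt a) 1
      (fun y _ => wt_pos a y)
    rw [herase] at hle
    simp only [smul_eq_mul, mul_one] at hle
    have := Finset.card_pos.2 ⟨z, hz⟩
    omega
  obtain ⟨z', hz'⟩ := Finset.card_eq_one.1 hcard1
  rw [hz', Finset.mem_singleton] at hz
  subst hz
  have hCs_eq : Cs a b c f (Sum.inl i) = {x, z} := by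
    rw [← Finset.insert_erase hx, hz']
  have hvx : ∀ r : Fin 5, f (Sum.inl (i,r)) = x ∨ f (Sum.inl (i,r)) = z := by
    intro r
    have hmem' : f (Sum.inl (i,r)) ∈ Cs a b c f (Sum.inl i) := by
      simp only [Cs, Finset.mem_image, Finset.mem_univ, true_and]
      exact ⟨r, rfl⟩
    rw [hCs_eq] at hmem'
    simpa using hmem'
  obtain ⟨rz, hrz⟩ : ∃ rz : Fin 5, f (Sum.inl (i,rz)) = z := by
    have hzc : z ∈ Cs a b c f (Sum.inl i) :=
      Finset.mem_of_mem_erase (hz' ▸ Finset.mem_singleton_self z)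
    simp only [Cs, Finset.mem_image, Finset.mem_univ, true_and] at hzc
    exact hzc
  obtain ⟨dz, hdz⟩ := exists_repr a b c f hmem i rz z hza hrz
  obtain ⟨dx, hdx, hbad⟩ : ∃ dx, reprD a b c x dx ∧ ¬ goodIdx dx := by
    rcases hY with ⟨ib,jb,hb,rfl⟩|⟨ic,jc,hb,rfl⟩
    · exact ⟨Sum.inr jb, ⟨ib, rfl⟩, by simp [goodIdx]; omega⟩
    · exact ⟨Sum.inl jc, ⟨ic, rfl⟩, by simp [goodIdx]; omega⟩
  have hcov : ∀ r : Fin 5, hits dx r ∨ hits dz r := by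
    intro r
    rcases hvx r with hfr | hfr
    · exact Or.inl (hit_of_eq a b c f hmem i r x dx hdx hxa hfr)
    · exact Or.inr (hit_of_eq a b c f hmem i r z dz hdz hza hfr)
  exact hbad (cover2 dx dz hcov).1

lemma hYsmall (a b c : ℕ) (f : Vtx a b c → ℕ) (hmem : ∀ v, f v ∈ LL a b c v)
    (i : Fin (a + 2*b + 3*c - a - 1)) (x : ℕ) (hx : x ∈ Cs a b c f (Sum.inr i))
    (hY : isY a b c x) : x = f (Sum.inr (i,1)) := by
  simp only [Cs, Finset.mem_image, Finset.mem_univ, true_and] at hx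
  obtain ⟨q, hq⟩ := hx
  have hq01 : q = 0 ∨ q = 1 := by
    rcases q with ⟨qv, hqv⟩
    interval_cases qv
    · exact Or.inl rfl
    · exact Or.inr rfl
  rcases hq01 with rfl | rfl
  · exfalso
    rcases decomp_small0 a b c f hmem i with ⟨ia,h⟩|⟨ic',jc',hm,h⟩|⟨ib',jb',hm,h⟩ <;>
      rw [hq] at h
    · have := ia.isLt
      rcases hY with ⟨ib,jb,hb,rfl⟩|⟨ic,jc,hb,rfl⟩ <;> omega
    · have h3 := idxA5 jc' hm
      have := jc'.isLt; have := ic'.isLt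
      rcases hY with ⟨ib,jb,hb,rfl⟩|⟨ic,jc,hb,rfl⟩
      · have := jb.isLt; have := ib.isLt; omega
      · have := jc.isLt; have := ic.isLt; omega
    · have h3 := idxB5 jb' hm
      have := jb'.isLt; have := ib'.isLt
      rcases hY with ⟨ib,jb,hb,rfl⟩|⟨ic,jc,hb,rfl⟩
      · have := jb.isLt; have := ib.isLt; omega
      · have := jc.isLt; have := ic.isLt; omega
  · exact hq.symm

lemma noProper (a b c : ℕ) (hc : 1 ≤ c) (f : Vtx a b c → ℕ)
    (hmem : ∀ v, f v ∈ LL a b c v)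
    (hadj : ∀ ⦃u v⦄, (Gmp a b c).Adj u v → f u ≠ f v) : False := by
  have key : ∀ u v : Vtx a b c, partOf a b c u ≠ partOf a b c v → f u ≠ f v := by
    intro u v hne
    apply hadj
    rw [Gmp, SimpleGraph.fromRel_adj]
    exact ⟨fun h => hne (congrArg _ h), Or.inl hne⟩
  have hdisj : ∀ p q : Fin (a+1) ⊕ Fin (a+2*b+3*c-a-1), p ≠ q →
      Disjoint (Cs a b c f p) (Cs a b c f q) := by
    intro p q hpq
    rw [Finset.disjoint_left]
    rintro x hxp hxq
    rw [mem_Cs] at hxp hxq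
    obtain ⟨u, hu, hfu⟩ := hxp
    obtain ⟨v, hv, hfv⟩ := hxq
    exact key u v (by rw [hu, hv]; exact hpq) (hfu.trans hfv.symm)
  have hPD : Set.PairwiseDisjoint
      (↑(Finset.univ : Finset (Fin (a+1) ⊕ Fin (a+2*b+3*c-a-1)))) (Cs a b c f) :=
    fun p _ q _ hpq => hdisj p q hpq
  have hsub : Finset.univ.biUnion (Cs a b c f) ⊆ Finset.range (a + (4*b+6*c)) := by
    intro x hx
    rw [Finset.mem_biUnion] at hx
    obtain ⟨p, -, hx⟩ := hx
    rw [mem_Cs] at hx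
    obtain ⟨u, -, rfl⟩ := hx
    rw [Finset.mem_range]
    have := hrange a b c f hmem u
    omega
  have hcard : (Finset.univ : Finset (Fin (a+1) ⊕ Fin (a+2*b+3*c-a-1))).card
      = a+2*b+3*c := by
    simp only [Finset.card_univ, Fintype.card_sum, Fintype.card_fin]
    omega
  have hbiu := Finset.sum_biUnion (f := wt a) hPD
  have hble : ∑ y ∈ Finset.univ.biUnion (Cs a b c f), wt a y ≤ 2*a + (4*b+6*c) := by
    calc ∑ y ∈ Finset.univ.biUnion (Cs a b c f), wt a y
        ≤ ∑ y ∈ Finset.range (a + (4*b+6*c)), wt a y :=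
          Finset.sum_le_sum_of_subset hsub
      _ = 2*a + (4*b+6*c) := sum_wt a (4*b+6*c)
  have hbge : 2*(a+2*b+3*c) ≤ ∑ p, ∑ y ∈ Cs a b c f p, wt a y := by
    have h := Finset.card_nsmul_le_sum Finset.univ
      (fun p => ∑ y ∈ Cs a b c f p, wt a y) 2 (fun p _ => hge2 a b c f hmem p)
    rw [hcard, smul_eq_mul] at h
    omega
  have htot : ∑ p, ∑ y ∈ Cs a b c f p, wt a y = 2*(a+2*b+3*c) := by
    rw [← hbiu] at hbge ⊢
    omega
  have heach : ∀ p, ∑ y ∈ Cs a b c f p, wt a y = 2 := by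
    by_contra h
    push_neg at h
    obtain ⟨p0, hp0⟩ := h
    have hlt := Finset.sum_lt_sum (s := Finset.univ)
      (f := fun _ => 2) (g := fun p => ∑ y ∈ Cs a b c f p, wt a y)
      (fun p _ => hge2 a b c f hmem p)
      ⟨p0, Finset.mem_univ _, lt_of_le_of_ne (hge2 a b c f hmem p0) (Ne.symm hp0)⟩
    rw [Finset.sum_const, hcard, smul_eq_mul, htot] at hlt
    omega
  have hcover : ∀ x, x < a + 4*b + 6*c → x ∈ Finset.univ.biUnion (Cs a b c f) := by
    intro x hxN
    by_contra hx
    have hlt := Finset.sum_lt_sum_of_subset (f := wt a) hsub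
      (Finset.mem_range.2 (by omega : x < a + (4*b+6*c))) hx
      (wt_pos a x) (fun j _ _ => Nat.zero_le _)
    rw [sum_wt a (4*b+6*c), hbiu, htot] at hlt
    omega
  -- the set Y of "second-vertex-only" colours
  set gY : (Fin b × Fin 2) ⊕ (Fin c × Fin 3) → ℕ :=
    Sum.elim (fun p => a + 4*(p.1:ℕ) + ((p.2:ℕ)+2))
             (fun p => a + 4*b + 6*(p.1:ℕ) + ((p.2:ℕ)+3)) with hgY
  set Y : Finset ℕ := Finset.image gY Finset.univ with hYdef
  have hginj : Function.Injective gY := by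
    rintro (⟨i1,j1⟩|⟨i1,j1⟩) (⟨i2,j2⟩|⟨i2,j2⟩) h <;>
      simp only [hgY, Sum.elim_inl, Sum.elim_inr] at h <;>
      have := j1.isLt <;> have := j2.isLt <;> have := i1.isLt <;> have := i2.isLt
    · have h1 : i1 = i2 := Fin.ext (by omega)
      have h2 : j1 = j2 := Fin.ext (by omega)
      rw [h1, h2]
    · omega
    · omega
    · have h1 : i1 = i2 := Fin.ext (by omega)
      have h2 : j1 = j2 := Fin.ext (by omega)
      rw [h1, h2]
  have hYcard : Y.card = 2*b + 3*c := by
    rw [hYdef, Finset.card_image_of_injective _ hginj, Finset.card_univ]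
    simp only [Fintype.card_sum, Fintype.card_prod, Fintype.card_fin]
    ring
  have hYisY : ∀ y ∈ Y, isY a b c y ∧ y < a + 4*b + 6*c := by
    intro y hy
    rw [hYdef, Finset.mem_image] at hy
    obtain ⟨q, -, rfl⟩ := hy
    rcases q with ⟨i,j⟩ | ⟨i,j⟩ <;>
      simp only [hgY, Sum.elim_inl, Sum.elim_inr] <;>
      have := j.isLt <;> have := i.isLt
    · exact ⟨Or.inl ⟨i, ⟨(j:ℕ)+2, by omega⟩, by simp, by simp⟩, by omega⟩
    · exact ⟨Or.inr ⟨i, ⟨(j:ℕ)+3, by omega⟩, by simp, by simp⟩, by omega⟩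
  have hYsub2 : Y ⊆ Finset.univ.biUnion
      (fun i : Fin (a+2*b+3*c-a-1) => Y ∩ Cs a b c f (Sum.inr i)) := by
    intro y hy
    obtain ⟨hisY, hyN⟩ := hYisY y hy
    have hyb := hcover y hyN
    rw [Finset.mem_biUnion] at hyb
    obtain ⟨p, -, hp⟩ := hyb
    rcases p with i | i
    · exact absurd hisY (fun hYy => hYbig a b c f hmem i (heach _) y hp hYy)
    · rw [Finset.mem_biUnion]
      exact ⟨i, Finset.mem_univ _, Finset.mem_inter.2 ⟨hy, hp⟩⟩
  have hcount : Y.card ≤ a+2*b+3*c-a-1 := by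
    calc Y.card ≤ (Finset.univ.biUnion
          (fun i : Fin (a+2*b+3*c-a-1) => Y ∩ Cs a b c f (Sum.inr i))).card :=
          Finset.card_le_card hYsub2
      _ ≤ ∑ i, (Y ∩ Cs a b c f (Sum.inr i)).card := Finset.card_biUnion_le
      _ ≤ ∑ _i : Fin (a+2*b+3*c-a-1), 1 := by
            refine Finset.sum_le_sum (fun i _ => ?_)
            have hsub1 : Y ∩ Cs a b c f (Sum.inr i) ⊆ {f (Sum.inr (i,1))} := by
              intro z hz
              rw [Finset.mem_inter] at hz
              rw [Finset.mem_singleton]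
              exact hYsmall a b c f hmem i z hz.2 (hYisY z hz.1).1
            calc (Y ∩ Cs a b c f (Sum.inr i)).card ≤ _ := Finset.card_le_card hsub1
              _ = 1 := Finset.card_singleton _
      _ = a+2*b+3*c-a-1 := by simp
  omega

/-- Lemma `upper lemma 1`: for `k = a + 2b + 3c` (with `c ≥ 1`), the complete
`k`-partite graph `K_{5⋆(a+1), 2⋆(k-a-1)}` has chromatic number `k`, has
`2k + 3a + 3` vertices, and is not `λ`-choosable for `λ = {1⋆a, 2⋆b, 3⋆c}`. -/
theorem stmt8 (a b c : ℕ) (hc : 1 ≤ c) :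
    (Gmp a b c).chromaticNumber = ((a + 2*b + 3*c : ℕ) : ℕ∞) ∧
    Fintype.card (Vtx a b c) = 2*(a + 2*b + 3*c) + 3*a + 3 ∧
    ¬ LamChoosable (Gmp a b c)
        (List.replicate a 1 ++ List.replicate b 2 ++ List.replicate c 3) := by
  refine ⟨?_, ?_, ?_⟩
  · set m := a + 2*b + 3*c - a - 1 with hm
    apply le_antisymm
    · have col : (Gmp a b c).Coloring (Fin (a+1) ⊕ Fin m) := by
        refine SimpleGraph.Coloring.mk (partOf a b c) ?_
        intro u v huv
        simp [Gmp, SimpleGraph.fromRel_adj] at huv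
        rcases huv.2 with h | h
        · exact h
        · exact (h ∘ Eq.symm)
      have h := col.colorable.chromaticNumber_le
      refine le_trans h ?_
      simp only [Fintype.card_sum, Fintype.card_fin, Nat.cast_le]
      omega
    · have hclq : (Gmp a b c).IsClique
          ((Finset.image (Sum.elim (fun i : Fin (a+1) => Sum.inl (i, (0:Fin 5)))
            (fun i : Fin m => Sum.inr (i, (0:Fin 2)))) Finset.univ : Finset _) : Set _) := by
        intro x hx y hy hxy
        simp only [coe_image, Set.mem_image] at hx hy
        obtain ⟨p, -, rfl⟩ := hx
        obtain ⟨q, -, rfl⟩ := hy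
        constructor
        · exact hxy
        · left
          rcases p with p | p <;> rcases q with q | q <;> simp_all [partOf, Sum.map]
      have h := hclq.card_le_chromaticNumber
      refine le_trans ?_ h
      rw [Finset.card_image_of_injective]
      · simp only [card_univ, Fintype.card_sum, Fintype.card_fin, Nat.cast_le]
        omega
      · intro p q h
        rcases p with p | p <;> rcases q with q | q <;> simp_all
  · simp only [Fintype.card_sum, Fintype.card_prod, Fintype.card_fin]
    omega
  · intro hch
    obtain ⟨f, hmem, hadj⟩ := hch (LL a b c) (lamA a b c)
    exact noProper a b c hc f hmem hadj
end

section
/- Let φ be a proper list coloring of the complete k-partite graph G = K_{5⋆(a+1),2⋆(k−a−1)} with respect to the list assignment L of Lemma 'upper lemma 1'. Then for every partite set P of G, either φ(P) = {e} for a single color e ∈ E, or |φ(P)| ≥ 2 and φ(P) ∩ E = ∅; consequently |φ(V(G))| ≥ a + 2(k − a) = 2k − a. -/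
open Finset

/-- For any proper colouring `φ` of `K_{5⋆(a+1),2⋆(k-a-1)}` from the lists of
Lemma `upper lemma 1`: every partite set `P` satisfies either `φ(P) = {e}`
for a single `e ∈ E`, or `|φ(P)| ≥ 2` and `φ(P) ∩ E = ∅`; consequently
`|φ(V(G))| ≥ 2k - a`. -/
theorem stmt9 (a b c : ℕ) (s : Fin c → Fin 6 → ℕ) (t : Fin b → Fin 4 → ℕ)
    (e : Fin a → ℕ)
    (hs : Function.Injective fun p : Fin c × Fin 6 => s p.1 p.2)
    (ht : Function.Injective fun p : Fin b × Fin 4 => t p.1 p.2)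
    (he : Function.Injective e)
    (hst : ∀ (p : Fin c × Fin 6) (q : Fin b × Fin 4), s p.1 p.2 ≠ t q.1 q.2)
    (hse : ∀ (p : Fin c × Fin 6) (m : Fin a), s p.1 p.2 ≠ e m)
    (hte : ∀ (q : Fin b × Fin 4) (m : Fin a), t q.1 q.2 ≠ e m)
    (φ : Vtx a b c → ℕ)
    (hmem : ∀ v, φ v ∈ Lassign a b c s t e v)
    (hproper : ∀ ⦃u v⦄, (Gmp a b c).Adj u v → φ u ≠ φ v) :
    (∀ p : Fin (a + 1) ⊕ Fin (a + 2*b + 3*c - a - 1),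
      (∃ e0 ∈ Eset a e,
          (Finset.univ.filter fun v => partOf a b c v = p).image φ = {e0}) ∨
      (2 ≤ ((Finset.univ.filter fun v => partOf a b c v = p).image φ).card ∧
        ((Finset.univ.filter fun v => partOf a b c v = p).image φ) ∩ Eset a e = ∅)) ∧
    2*(a + 2*b + 3*c) - a ≤ (Finset.univ.image φ).card := by
  classical
  set F : (Fin (a+1) ⊕ Fin (a + 2*b + 3*c - a - 1)) → Finset ℕ :=
    fun p => (Finset.univ.filter fun v => partOf a b c v = p).image φ with hFdef
  have hmemF : ∀ p x, x ∈ F p ↔ ∃ v, partOf a b c v = p ∧ φ v = x := by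
    intro p x
    simp [hFdef]
  have hvert : ∀ v, φ v ∈ F (partOf a b c v) := fun v => (hmemF _ _).2 ⟨v, rfl, rfl⟩
  -- colour sets of distinct parts are disjoint
  have hdisj : ∀ p q, p ≠ q → Disjoint (F p) (F q) := by
    intro p q hpq
    rw [Finset.disjoint_left]
    intro x hxp hxq
    obtain ⟨u, hu, hux⟩ := (hmemF p x).1 hxp
    obtain ⟨v, hv, hvx⟩ := (hmemF q x).1 hxq
    have huv : u ≠ v := by
      rintro rfl
      exact hpq (hu ▸ hv)
    have hadj : (Gmp a b c).Adj u v := by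
      rw [Gmp, SimpleGraph.fromRel_adj]
      exact ⟨huv, Or.inl (by rw [hu, hv]; exact hpq)⟩
    exact hproper hadj (hux.trans hvx.symm)
  -- every part is nonempty
  have hne : ∀ p, (F p).Nonempty := by
    rintro (i | i)
    · exact ⟨φ (Sum.inl (i, 0)), hvert (Sum.inl (i, 0))⟩
    · exact ⟨φ (Sum.inr (i, 0)), hvert (Sum.inr (i, 0))⟩
  -- the full colour families
  set SS : Finset ℕ := (Finset.univ : Finset (Fin c × Fin 6)).image (fun q => s q.1 q.2) with hSSdef
  set TT : Finset ℕ := (Finset.univ : Finset (Fin b × Fin 4)).image (fun q => t q.1 q.2) with hTTdef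
  have hSScard : SS.card = c * 6 := by
    rw [hSSdef, Finset.card_image_of_injective _ hs, Finset.card_univ]
    simp
  have hTTcard : TT.card = b * 4 := by
    rw [hTTdef, Finset.card_image_of_injective _ ht, Finset.card_univ]
    simp
  have hEcard : (Eset a e).card = a := by
    rw [Eset, Finset.card_image_of_injective _ he, Finset.card_univ]
    simp
  have hAmem : ∀ j x, x ∈ Aset c s j ↔ ∃ i m, m ∈ Aidx j ∧ s i m = x := by
    intro j x
    simp [Aset]
  have hBmem : ∀ j x, x ∈ Bset b t j ↔ ∃ i m, m ∈ Bidx j ∧ t i m = x := by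
    intro j x
    simp [Bset]
  have hFsub : ∀ p, F p ⊆ SS ∪ TT ∪ Eset a e := by
    intro p x hx
    obtain ⟨v, -, rfl⟩ := (hmemF p x).1 hx
    have hv := hmem v
    have : Lassign a b c s t e v ⊆ SS ∪ TT ∪ Eset a e := by
      have hA : ∀ j, Aset c s j ⊆ SS := by
        intro j y hy
        obtain ⟨i, m, -, rfl⟩ := (hAmem j y).1 hy
        rw [hSSdef]
        exact Finset.mem_image.2 ⟨(i, m), Finset.mem_univ _, rfl⟩
      have hB : ∀ j, Bset b t j ⊆ TT := by
        intro j y hy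
        obtain ⟨i, m, -, rfl⟩ := (hBmem j y).1 hy
        rw [hTTdef]
        exact Finset.mem_image.2 ⟨(i, m), Finset.mem_univ _, rfl⟩
      obtain (⟨i, j⟩ | ⟨i, j⟩) := v <;>
        · show (_ : Finset ℕ) ∪ _ ∪ _ ⊆ _
          exact Finset.union_subset (Finset.union_subset
            ((hA _).trans (Finset.subset_union_left.trans Finset.subset_union_left))
            ((hB _).trans (Finset.subset_union_right.trans Finset.subset_union_left)))
            Finset.subset_union_right
    exact this hv
  -- key local lemma: an E-free part uses at least two colours
  have key : ∀ p, F p ∩ Eset a e = ∅ → 2 ≤ (F p).card := by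
    intro p hpE
    by_contra hlt
    push_neg at hlt
    have hcard1 : (F p).card = 1 := le_antisymm (by omega) (Finset.card_pos.2 (hne p))
    obtain ⟨x, hx⟩ := Finset.card_eq_one.1 hcard1
    have hxE : x ∉ Eset a e := by
      intro hxe
      have : x ∈ F p ∩ Eset a e :=
        Finset.mem_inter.2 ⟨hx ▸ Finset.mem_singleton_self x, hxe⟩
      rw [hpE] at this
      exact absurd this (Finset.notMem_empty x)
    have hall : ∀ v, partOf a b c v = p → φ v = x := by
      intro v hv
      have := hvert v
      rw [hv, hx, Finset.mem_singleton] at this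
      exact this
    obtain (i | i) := p
    · -- big part, 5 vertices
      have hxL : ∀ j : Fin 5, x ∈ Aset c s (Fin.castLE (by norm_num) j) ∪
          Bset b t (Fin.castLE (by norm_num) j) := by
        intro j
        have h1 : φ (Sum.inl (i, j)) = x := hall _ rfl
        have h2 := hmem (Sum.inl (i, j))
        rw [h1] at h2
        rcases Finset.mem_union.1 h2 with h | h
        · exact h
        · exact absurd h hxE
      rcases Finset.mem_union.1 (hxL 0) with h0 | h0
      · obtain ⟨i0, m0, hm0, rfl⟩ := (hAmem _ _).1 h0
        have hm : ∀ j : Fin 5, m0 ∈ Aidx (Fin.castLE (by norm_num) j) := by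
          intro j
          rcases Finset.mem_union.1 (hxL j) with h | h
          · obtain ⟨i1, m1, hm1, heq⟩ := (hAmem _ _).1 h
            have : (⟨i1, m1⟩ : Fin c × Fin 6) = ⟨i0, m0⟩ := hs heq
            rw [Prod.mk.injEq] at this
            obtain ⟨rfl, rfl⟩ := this
            exact hm1
          · obtain ⟨i1, m1, hm1, heq⟩ := (hBmem _ _).1 h
            exact absurd heq.symm (hst ⟨i0, m0⟩ ⟨i1, m1⟩)
        have hcon : m0 ∈ Aidx (Fin.castLE (by norm_num) (0 : Fin 5)) ∧
            m0 ∈ Aidx (Fin.castLE (by norm_num) (2 : Fin 5)) ∧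
            m0 ∈ Aidx (Fin.castLE (by norm_num) (3 : Fin 5)) := ⟨hm 0, hm 2, hm 3⟩
        exact (by decide : ∀ m : Fin 6, ¬(m ∈ Aidx (Fin.castLE (by norm_num) (0 : Fin 5)) ∧
            m ∈ Aidx (Fin.castLE (by norm_num) (2 : Fin 5)) ∧
            m ∈ Aidx (Fin.castLE (by norm_num) (3 : Fin 5)))) m0 hcon
      · obtain ⟨i0, m0, hm0, rfl⟩ := (hBmem _ _).1 h0
        have hm : ∀ j : Fin 5, m0 ∈ Bidx (Fin.castLE (by norm_num) j) := by
          intro j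
          rcases Finset.mem_union.1 (hxL j) with h | h
          · obtain ⟨i1, m1, hm1, heq⟩ := (hAmem _ _).1 h
            exact absurd heq (hst ⟨i1, m1⟩ ⟨i0, m0⟩)
          · obtain ⟨i1, m1, hm1, heq⟩ := (hBmem _ _).1 h
            have : (⟨i1, m1⟩ : Fin b × Fin 4) = ⟨i0, m0⟩ := ht heq
            rw [Prod.mk.injEq] at this
            obtain ⟨rfl, rfl⟩ := this
            exact hm1
        have hcon : m0 ∈ Bidx (Fin.castLE (by norm_num) (0 : Fin 5)) ∧
            m0 ∈ Bidx (Fin.castLE (by norm_num) (2 : Fin 5)) ∧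
            m0 ∈ Bidx (Fin.castLE (by norm_num) (3 : Fin 5)) := ⟨hm 0, hm 2, hm 3⟩
        exact (by decide : ∀ m : Fin 4, ¬(m ∈ Bidx (Fin.castLE (by norm_num) (0 : Fin 5)) ∧
            m ∈ Bidx (Fin.castLE (by norm_num) (2 : Fin 5)) ∧
            m ∈ Bidx (Fin.castLE (by norm_num) (3 : Fin 5)))) m0 hcon
    · -- small part, 2 vertices
      have hxL : ∀ j : Fin 2, x ∈ Aset c s ⟨j.1 + 5, by omega⟩ ∪
          Bset b t ⟨j.1 + 5, by omega⟩ := by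
        intro j
        have h1 : φ (Sum.inr (i, j)) = x := hall _ rfl
        have h2 := hmem (Sum.inr (i, j))
        rw [h1] at h2
        rcases Finset.mem_union.1 h2 with h | h
        · exact h
        · exact absurd h hxE
      rcases Finset.mem_union.1 (hxL 0) with h0 | h0
      · obtain ⟨i0, m0, hm0, rfl⟩ := (hAmem _ _).1 h0
        have hm : ∀ j : Fin 2, m0 ∈ Aidx ⟨j.1 + 5, by omega⟩ := by
          intro j
          rcases Finset.mem_union.1 (hxL j) with h | h
          · obtain ⟨i1, m1, hm1, heq⟩ := (hAmem _ _).1 h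
            have : (⟨i1, m1⟩ : Fin c × Fin 6) = ⟨i0, m0⟩ := hs heq
            rw [Prod.mk.injEq] at this
            obtain ⟨rfl, rfl⟩ := this
            exact hm1
          · obtain ⟨i1, m1, hm1, heq⟩ := (hBmem _ _).1 h
            exact absurd heq.symm (hst ⟨i0, m0⟩ ⟨i1, m1⟩)
        have hcon : m0 ∈ Aidx (5 : Fin 7) ∧ m0 ∈ Aidx (6 : Fin 7) := ⟨hm 0, hm 1⟩
        exact (by decide : ∀ m : Fin 6, ¬(m ∈ Aidx (5 : Fin 7) ∧ m ∈ Aidx (6 : Fin 7))) m0 hcon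
      · obtain ⟨i0, m0, hm0, rfl⟩ := (hBmem _ _).1 h0
        have hm : ∀ j : Fin 2, m0 ∈ Bidx ⟨j.1 + 5, by omega⟩ := by
          intro j
          rcases Finset.mem_union.1 (hxL j) with h | h
          · obtain ⟨i1, m1, hm1, heq⟩ := (hAmem _ _).1 h
            exact absurd heq (hst ⟨i1, m1⟩ ⟨i0, m0⟩)
          · obtain ⟨i1, m1, hm1, heq⟩ := (hBmem _ _).1 h
            have : (⟨i1, m1⟩ : Fin b × Fin 4) = ⟨i0, m0⟩ := ht heq
            rw [Prod.mk.injEq] at this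
            obtain ⟨rfl, rfl⟩ := this
            exact hm1
        have hcon : m0 ∈ Bidx (5 : Fin 7) ∧ m0 ∈ Bidx (6 : Fin 7) := ⟨hm 0, hm 1⟩
        exact (by decide : ∀ m : Fin 4, ¬(m ∈ Bidx (5 : Fin 7) ∧ m ∈ Bidx (6 : Fin 7))) m0 hcon
  -- the parts meeting E, and the E-free parts
  set M := Finset.univ.filter
      (fun p : Fin (a+1) ⊕ Fin (a + 2*b + 3*c - a - 1) => (F p ∩ Eset a e).Nonempty) with hMdef
  set Mc := Finset.univ.filter
      (fun p : Fin (a+1) ⊕ Fin (a + 2*b + 3*c - a - 1) => ¬ (F p ∩ Eset a e).Nonempty) with hMcdef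
  have hsplit : M.card + Mc.card = (a + 1) + (a + 2*b + 3*c - a - 1) := by
    rw [hMdef, hMcdef, Finset.card_filter_add_card_filter_not, Finset.card_univ]
    simp
  have hMcE : ∀ p ∈ Mc, F p ∩ Eset a e = ∅ := by
    intro p hp
    rw [hMcdef, Finset.mem_filter] at hp
    exact Finset.not_nonempty_iff_eq_empty.1 hp.2
  -- number of parts meeting E is at most a
  have hMcard : M.card ≤ a := by
    have hdisj' : ∀ p ∈ M, ∀ q ∈ M, p ≠ q →
        Disjoint (F p ∩ Eset a e) (F q ∩ Eset a e) := by
      intro p _ q _ hpq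
      exact (hdisj p q hpq).mono Finset.inter_subset_left Finset.inter_subset_left
    have h1 : M.card ≤ (M.biUnion fun p => F p ∩ Eset a e).card := by
      rw [Finset.card_biUnion hdisj']
      calc M.card = ∑ _p ∈ M, 1 := by simp
        _ ≤ _ := Finset.sum_le_sum (fun p hp => by
            rw [hMdef, Finset.mem_filter] at hp
            exact Finset.card_pos.2 hp.2)
    refine h1.trans ?_
    calc (M.biUnion fun p => F p ∩ Eset a e).card ≤ (Eset a e).card :=
          Finset.card_le_card (Finset.biUnion_subset.2 fun p _ => Finset.inter_subset_right)
      _ = a := hEcard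
  -- E-free parts use at least 2*Mc.card colours, all outside E
  have hdisjMc : ∀ p ∈ Mc, ∀ q ∈ Mc, p ≠ q → Disjoint (F p) (F q) :=
    fun p _ q _ hpq => hdisj p q hpq
  have hMcBcard : 2 * Mc.card ≤ (Mc.biUnion F).card := by
    rw [Finset.card_biUnion hdisjMc]
    calc 2 * Mc.card = ∑ _p ∈ Mc, 2 := by
          rw [Finset.sum_const, smul_eq_mul, mul_comm]
      _ ≤ _ := Finset.sum_le_sum (fun p hp => key p (hMcE p hp))
  have hMcBsub : Mc.biUnion F ⊆ SS ∪ TT := by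
    intro x hx
    obtain ⟨p, hp, hxp⟩ := Finset.mem_biUnion.1 hx
    have hxE : x ∉ Eset a e := by
      intro hxe
      have : x ∈ F p ∩ Eset a e := Finset.mem_inter.2 ⟨hxp, hxe⟩
      rw [hMcE p hp] at this
      exact absurd this (Finset.notMem_empty x)
    rcases Finset.mem_union.1 (hFsub p hxp) with h | h
    · exact h
    · exact absurd h hxE
  have hSTcard : (SS ∪ TT).card ≤ c * 6 + b * 4 := by
    calc (SS ∪ TT).card ≤ SS.card + TT.card := Finset.card_union_le _ _
      _ = c * 6 + b * 4 := by rw [hSScard, hTTcard]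
  have hMcBound : 2 * Mc.card ≤ c * 6 + b * 4 :=
    hMcBcard.trans ((Finset.card_le_card hMcBsub).trans hSTcard)
  -- claim A : a part meeting E only uses colours of E
  have claimA : ∀ p ∈ M, ∀ x ∈ F p, x ∈ Eset a e := by
    intro p hp x hxF
    by_contra hxE
    have hxST : x ∈ SS ∪ TT := by
      rcases Finset.mem_union.1 (hFsub p hxF) with h | h
      · exact h
      · exact absurd h hxE
    have hxnot : x ∉ Mc.biUnion F := by
      intro hx
      obtain ⟨q, hq, hxq⟩ := Finset.mem_biUnion.1 hx
      have hpq : p ≠ q := by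
        rintro rfl
        rw [hMdef, Finset.mem_filter] at hp
        rw [hMcdef, Finset.mem_filter] at hq
        exact hq.2 hp.2
      exact (Finset.disjoint_left.1 (hdisj p q hpq)) hxF hxq
    have h1 : 2 * Mc.card + 1 ≤ (insert x (Mc.biUnion F)).card := by
      rw [Finset.card_insert_of_notMem hxnot]
      omega
    have h2 : insert x (Mc.biUnion F) ⊆ SS ∪ TT := Finset.insert_subset hxST hMcBsub
    have h3 := h1.trans ((Finset.card_le_card h2).trans hSTcard)
    omega
  -- claim B : a part meeting E meets it in exactly one colour
  have claimB : ∀ p ∈ M, ∀ x ∈ F p ∩ Eset a e, ∀ y ∈ F p ∩ Eset a e, x = y := by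
    intro p hp x hx y hy
    by_contra hxy
    have h2le : 1 < (F p ∩ Eset a e).card :=
      Finset.one_lt_card.2 ⟨x, hx, y, hy, hxy⟩
    have hdisj' : ∀ p ∈ M, ∀ q ∈ M, p ≠ q →
        Disjoint (F p ∩ Eset a e) (F q ∩ Eset a e) := by
      intro p _ q _ hpq
      exact (hdisj p q hpq).mono Finset.inter_subset_left Finset.inter_subset_left
    have h1 : M.card + 1 ≤ (M.biUnion fun p => F p ∩ Eset a e).card := by
      rw [Finset.card_biUnion hdisj']
      have := Finset.sum_lt_sum (s := M) (f := fun _ => 1)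
        (g := fun p => (F p ∩ Eset a e).card)
        (fun q hq => by
          rw [hMdef, Finset.mem_filter] at hq
          exact Finset.card_pos.2 hq.2)
        ⟨p, hp, h2le⟩
      simpa using this
    have h2 : (M.biUnion fun p => F p ∩ Eset a e).card ≤ a := by
      calc (M.biUnion fun p => F p ∩ Eset a e).card ≤ (Eset a e).card :=
            Finset.card_le_card (Finset.biUnion_subset.2 fun q _ => Finset.inter_subset_right)
        _ = a := hEcard
    have h3 := h1.trans h2
    omega
  constructor
  · intro p
    by_cases hp : (F p ∩ Eset a e).Nonempty
    · left
      have hpM : p ∈ M := by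
        rw [hMdef, Finset.mem_filter]
        exact ⟨Finset.mem_univ _, hp⟩
      obtain ⟨e0, he0⟩ := hp
      have he0F : e0 ∈ F p := (Finset.mem_inter.1 he0).1
      have he0E : e0 ∈ Eset a e := (Finset.mem_inter.1 he0).2
      refine ⟨e0, he0E, ?_⟩
      show F p = {e0}
      apply Finset.Subset.antisymm
      · intro x hxF
        have hxE := claimA p hpM x hxF
        rw [Finset.mem_singleton]
        exact claimB p hpM x (Finset.mem_inter.2 ⟨hxF, hxE⟩) e0 he0
      · intro x hx
        rw [Finset.mem_singleton] at hx
        exact hx ▸ he0F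
    · right
      have hempty := Finset.not_nonempty_iff_eq_empty.1 hp
      exact ⟨key p hempty, hempty⟩
  · -- counting
    have hdisjU : ∀ p ∈ (Finset.univ : Finset (Fin (a+1) ⊕ Fin (a + 2*b + 3*c - a - 1))),
        ∀ q ∈ Finset.univ, p ≠ q → Disjoint (F p) (F q) :=
      fun p _ q _ hpq => hdisj p q hpq
    have hsub : Finset.univ.biUnion F ⊆ Finset.univ.image φ := by
      intro x hx
      obtain ⟨p, -, hxp⟩ := Finset.mem_biUnion.1 hx
      obtain ⟨v, -, rfl⟩ := (hmemF p x).1 hxp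
      exact Finset.mem_image_of_mem φ (Finset.mem_univ v)
    have hcount : M.card + 2 * Mc.card ≤ (Finset.univ.biUnion F).card := by
      rw [Finset.card_biUnion hdisjU]
      have hM' : ∑ p ∈ M, 1 ≤ ∑ p ∈ M, (F p).card :=
        Finset.sum_le_sum (fun p _ => Finset.card_pos.2 (hne p))
      have hMc' : ∑ p ∈ Mc, 2 ≤ ∑ p ∈ Mc, (F p).card :=
        Finset.sum_le_sum (fun p hp => key p (hMcE p hp))
      have hsum : ∑ p ∈ M, (F p).card + ∑ p ∈ Mc, (F p).card
          = ∑ p, (F p).card := by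
        rw [hMdef, hMcdef]
        exact Finset.sum_filter_add_sum_filter_not _ _ _
      have e1 : ∑ _p ∈ M, 1 = M.card := by simp
      have e2 : ∑ _p ∈ Mc, 2 = 2 * Mc.card := by
        rw [Finset.sum_const, smul_eq_mul, mul_comm]
      omega
    have := hcount.trans (Finset.card_le_card hsub)
    omega
end

section
/- With the list assignment L of Lemma 'upper lemma 1': if φ is a proper L-coloring of G = K_{5⋆(a+1),2⋆(k−a−1)} and U_i is a partite set of size 5 with |φ(U_i)| = 2, then φ(U_i) ⊆ A_6 ∪ B_6, where A_6 = ∪_{j=1}^{c}{s_{j,1},s_{j,2},s_{j,3}} and B_6 = ∪_{j=1}^{b}{t_{j,1},t_{j,2}}. -/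
open Finset

/- ### auxiliary decidable facts -/

abbrev Kind6 := Fin 6 ⊕ Fin 4

def covb : Kind6 → Fin 5 → Bool
  | Sum.inl m, j => decide (m ∈ Aidx (Fin.castLE (by norm_num) j))
  | Sum.inr q, j => decide (q ∈ Bidx (Fin.castLE (by norm_num) j))

def inP1b : Kind6 → Bool
  | Sum.inl m => decide (m ∈ Aidx 5)
  | Sum.inr q => decide (q ∈ Bidx 5)

lemma cover_single : ∀ x : Kind6, ¬ ∀ j : Fin 5, covb x j = true := by decide

lemma cover_master : ∀ x y : Kind6, (inP1b x = false ∨ inP1b y = false) →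
    ¬ ∀ j : Fin 5, (covb x j = true ∨ covb y j = true) := by decide

lemma mem_A56 : ∀ m : Fin 6, m ∈ Aidx 5 ∨ m ∈ Aidx 6 := by decide
lemma mem_B56 : ∀ q : Fin 4, q ∈ Bidx 5 ∨ q ∈ Bidx 6 := by decide
lemma notP1_s : ∀ m : Fin 6, m ∈ Aidx 6 → inP1b (Sum.inl m) = false := by decide
lemma notP1_t : ∀ q : Fin 4, q ∈ Bidx 6 → inP1b (Sum.inr q) = false := by decide

lemma mem_Aset' {c : ℕ} {s : Fin c → Fin 6 → ℕ} {j : Fin 7} {z : ℕ} :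
    z ∈ Aset c s j ↔ ∃ i m, m ∈ Aidx j ∧ s i m = z := by
  simp only [Aset, mem_biUnion, mem_univ, true_and, mem_image]

lemma mem_Bset' {b : ℕ} {t : Fin b → Fin 4 → ℕ} {j : Fin 7} {z : ℕ} :
    z ∈ Bset b t j ↔ ∃ i q, q ∈ Bidx j ∧ t i q = z := by
  simp only [Bset, mem_biUnion, mem_univ, true_and, mem_image]

lemma mem_Eset' {a : ℕ} {e : Fin a → ℕ} {z : ℕ} :
    z ∈ Eset a e ↔ ∃ m, e m = z := by
  simp only [Eset, mem_image, mem_univ, true_and]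

/-- Claim 3.1 (`clm-1a`): if `φ` is a proper colouring of
`K_{5⋆(a+1),2⋆(k-a-1)}` from the lists of Lemma `upper lemma 1` and a
partite set `U_i` of size `5` gets exactly two colours, then
`φ(U_i) ⊆ A_6 ∪ B_6` (0-based: `Aset c s 5 ∪ Bset b t 5`). -/
theorem stmt10 (a b c : ℕ) (s : Fin c → Fin 6 → ℕ) (t : Fin b → Fin 4 → ℕ)
    (e : Fin a → ℕ)
    (hs : Function.Injective fun p : Fin c × Fin 6 => s p.1 p.2)
    (ht : Function.Injective fun p : Fin b × Fin 4 => t p.1 p.2)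
    (he : Function.Injective e)
    (hst : ∀ (p : Fin c × Fin 6) (q : Fin b × Fin 4), s p.1 p.2 ≠ t q.1 q.2)
    (hse : ∀ (p : Fin c × Fin 6) (m : Fin a), s p.1 p.2 ≠ e m)
    (hte : ∀ (q : Fin b × Fin 4) (m : Fin a), t q.1 q.2 ≠ e m)
    (φ : Vtx a b c → ℕ)
    (hmem : ∀ v, φ v ∈ Lassign a b c s t e v)
    (hproper : ∀ ⦃u v⦄, (Gmp a b c).Adj u v → φ u ≠ φ v)
    (i : Fin (a + 1))
    (h2 : (Finset.univ.image fun j : Fin 5 => φ (Sum.inl (i, j))).card = 2) :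
    (Finset.univ.image fun j : Fin 5 => φ (Sum.inl (i, j))) ⊆
      Aset c s 5 ∪ Bset b t 5 := by
  classical
  set n := a + 2*b + 3*c - a - 1 with hn
  set U : Fin (a+1) → Finset ℕ :=
    (fun i' : Fin (a+1) => Finset.univ.image fun j : Fin 5 => φ (Sum.inl (i', j))) with hU
  set Q1 : Finset ℕ := Aset c s 5 ∪ Bset b t 5 ∪ Eset a e with hQ1
  set Q2 : Finset ℕ := Aset c s 6 ∪ Bset b t 6 ∪ Eset a e with hQ2
  -- proper colouring across distinct parts
  have hdiff : ∀ u v : Vtx a b c, partOf a b c u ≠ partOf a b c v → φ u ≠ φ v := by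
    intro u v h
    refine hproper ?_
    rw [Gmp, SimpleGraph.fromRel_adj]
    exact ⟨fun huv => h (by rw [huv]), Or.inl h⟩
  -- list membership, big parts
  have hmemU : ∀ (i' : Fin (a+1)) (j : Fin 5), φ (Sum.inl (i', j)) ∈
      Aset c s (Fin.castLE (by norm_num) j) ∪ Bset b t (Fin.castLE (by norm_num) j)
        ∪ Eset a e := fun i' j => hmem (Sum.inl (i', j))
  -- list membership, small parts
  have hmemV0 : ∀ w : Fin n, φ (Sum.inr (w, 0)) ∈ Q1 := by
    intro w
    have h := hmem (Sum.inr (w, (0 : Fin 2)))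
    have h5 : (⟨(0 : Fin 2).1 + 5, by omega⟩ : Fin 7) = 5 := rfl
    simpa [Lassign, h5, hQ1] using h
  have hmemV1 : ∀ w : Fin n, φ (Sum.inr (w, 1)) ∈ Q2 := by
    intro w
    have h := hmem (Sum.inr (w, (1 : Fin 2)))
    have h5 : (⟨(1 : Fin 2).1 + 5, by omega⟩ : Fin 7) = 6 := rfl
    simpa [Lassign, h5, hQ2] using h
  -- injectivity facts from properness
  have hsA : ∀ (i0 : Fin c) (m0 : Fin 6) (J : Fin 7),
      s i0 m0 ∈ Aset c s J ∪ Bset b t J → m0 ∈ Aidx J := by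
    intro i0 m0 J h
    rcases mem_union.1 h with h | h
    · obtain ⟨i1, m1, hm1, he1⟩ := mem_Aset'.1 h
      have : (i1, m1) = (i0, m0) := hs he1
      rw [Prod.mk.injEq] at this
      rw [← this.2]; exact hm1
    · obtain ⟨i1, q1, hq1, he1⟩ := mem_Bset'.1 h
      exact absurd he1.symm (hst (i0, m0) (i1, q1))
  have htB : ∀ (i0 : Fin b) (q0 : Fin 4) (J : Fin 7),
      t i0 q0 ∈ Aset c s J ∪ Bset b t J → q0 ∈ Bidx J := by
    intro i0 q0 J h
    rcases mem_union.1 h with h | h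
    · obtain ⟨i1, m1, hm1, he1⟩ := mem_Aset'.1 h
      exact absurd he1 (hst (i1, m1) (i0, q0))
    · obtain ⟨i1, q1, hq1, he1⟩ := mem_Bset'.1 h
      have : (i1, q1) = (i0, q0) := ht he1
      rw [Prod.mk.injEq] at this
      rw [← this.2]; exact hq1
  -- kinds
  have hkind : ∀ z : ℕ, z ∈ (Aset c s 5 ∪ Bset b t 5) ∪ (Aset c s 6 ∪ Bset b t 6) →
      ∃ x : Kind6, ∀ j : Fin 5,
        z ∈ Aset c s (Fin.castLE (by norm_num) j) ∪ Bset b t (Fin.castLE (by norm_num) j) →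
          covb x j = true := by
    intro z hz
    have hrep : (∃ i0 m0, s i0 m0 = z) ∨ (∃ i0 q0, t i0 q0 = z) := by
      rcases mem_union.1 hz with h | h <;> rcases mem_union.1 h with h | h
      · obtain ⟨i0, m0, _, h⟩ := mem_Aset'.1 h; exact Or.inl ⟨i0, m0, h⟩
      · obtain ⟨i0, q0, _, h⟩ := mem_Bset'.1 h; exact Or.inr ⟨i0, q0, h⟩
      · obtain ⟨i0, m0, _, h⟩ := mem_Aset'.1 h; exact Or.inl ⟨i0, m0, h⟩
      · obtain ⟨i0, q0, _, h⟩ := mem_Bset'.1 h; exact Or.inr ⟨i0, q0, h⟩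
    rcases hrep with ⟨i0, m0, rfl⟩ | ⟨i0, q0, rfl⟩
    · exact ⟨Sum.inl m0, fun j hj => decide_eq_true (hsA i0 m0 _ hj)⟩
    · exact ⟨Sum.inr q0, fun j hj => decide_eq_true (htB i0 q0 _ hj)⟩
  -- every big-part colour lies in Q1 ∪ Q2
  have hUsub : ∀ i' : Fin (a+1), U i' ⊆ Q1 ∪ Q2 := by
    intro i' z hz
    simp only [hU, mem_image, mem_univ, true_and] at hz
    obtain ⟨j, rfl⟩ := hz
    rcases mem_union.1 (hmemU i' j) with h | h
    · rcases mem_union.1 h with h | h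
      · obtain ⟨i0, m0, hm0, hzeq⟩ := mem_Aset'.1 h
        rw [← hzeq]
        rcases mem_A56 m0 with h5 | h6
        · exact mem_union_left _ (by
            rw [hQ1]
            exact mem_union_left _ (mem_union_left _ (mem_Aset'.2 ⟨i0, m0, h5, rfl⟩)))
        · exact mem_union_right _ (by
            rw [hQ2]
            exact mem_union_left _ (mem_union_left _ (mem_Aset'.2 ⟨i0, m0, h6, rfl⟩)))
      · obtain ⟨i0, q0, hq0, hzeq⟩ := mem_Bset'.1 h
        rw [← hzeq]
        rcases mem_B56 q0 with h5 | h6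
        · exact mem_union_left _ (by
            rw [hQ1]
            exact mem_union_left _ (mem_union_right _ (mem_Bset'.2 ⟨i0, q0, h5, rfl⟩)))
        · exact mem_union_right _ (by
            rw [hQ2]
            exact mem_union_left _ (mem_union_right _ (mem_Bset'.2 ⟨i0, q0, h6, rfl⟩)))
    · exact mem_union_left _ (by rw [hQ1]; exact mem_union_right _ h)
  -- pairwise disjointness of big-part colour sets
  have hdisjU : ∀ i1 i2 : Fin (a+1), i1 ≠ i2 → Disjoint (U i1) (U i2) := by
    intro i1 i2 h12
    rw [Finset.disjoint_left]
    intro z hz1 hz2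
    simp only [hU, mem_image, mem_univ, true_and] at hz1 hz2
    obtain ⟨j1, hj1⟩ := hz1
    obtain ⟨j2, hj2⟩ := hz2
    refine hdiff (Sum.inl (i1, j1)) (Sum.inl (i2, j2)) ?_ (hj1.trans hj2.symm)
    exact fun h => h12 (Sum.inl_injective h)
  -- the budget inequality
  have hbud : ∀ (Q : Finset ℕ) (j2 : Fin 2), (∀ w : Fin n, φ (Sum.inr (w, j2)) ∈ Q) →
      (∑ i' : Fin (a+1), (U i' ∩ Q).card) + n ≤ Q.card := by
    intro Q j2 hQm
    have hdisj : ∀ i1 ∈ (univ : Finset (Fin (a+1))), ∀ i2 ∈ univ, i1 ≠ i2 →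
        Disjoint (U i1 ∩ Q) (U i2 ∩ Q) := fun i1 _ i2 _ h12 =>
      Finset.disjoint_of_subset_left (inter_subset_left)
        (Finset.disjoint_of_subset_right (inter_subset_left) (hdisjU i1 i2 h12))
    have hcard : (univ.biUnion fun i' => U i' ∩ Q).card
        = ∑ i' : Fin (a+1), (U i' ∩ Q).card := Finset.card_biUnion hdisj
    set S : Finset ℕ := univ.image (fun w : Fin n => φ (Sum.inr (w, j2))) with hS
    have hinj : Function.Injective (fun w : Fin n => φ (Sum.inr (w, j2))) := by
      intro w1 w2 hww
      by_contra hne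
      refine hdiff (Sum.inr (w1, j2)) (Sum.inr (w2, j2)) ?_ hww
      exact fun h => hne (Sum.inr_injective h)
    have hScard : S.card = n := by
      rw [hS, Finset.card_image_of_injective _ hinj, card_univ, Fintype.card_fin]
    have hdisjTS : Disjoint (univ.biUnion fun i' => U i' ∩ Q) S := by
      rw [Finset.disjoint_left]
      intro z hz1 hz2
      simp only [mem_biUnion, mem_univ, true_and] at hz1
      obtain ⟨i', hzi⟩ := hz1
      have hzU := (mem_inter.1 hzi).1
      simp only [hU, mem_image, mem_univ, true_and] at hzU
      obtain ⟨j1, hj1⟩ := hzU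
      rw [hS] at hz2
      simp only [mem_image, mem_univ, true_and] at hz2
      obtain ⟨w, hw⟩ := hz2
      refine hdiff (Sum.inl (i', j1)) (Sum.inr (w, j2)) ?_ (hj1.trans hw.symm)
      exact fun h => Sum.inl_ne_inr h
    have hsub : (univ.biUnion fun i' => U i' ∩ Q) ∪ S ⊆ Q := by
      intro z hz
      rcases mem_union.1 hz with h | h
      · simp only [mem_biUnion, mem_univ, true_and] at h
        obtain ⟨i', hzi⟩ := h
        exact (mem_inter.1 hzi).2
      · rw [hS] at h
        simp only [mem_image, mem_univ, true_and] at h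
        obtain ⟨w, hw⟩ := h
        rw [← hw]; exact hQm w
    have := Finset.card_le_card hsub
    rw [Finset.card_union_of_disjoint hdisjTS, hcard, hScard] at this
    exact this
  -- cardinality bounds on the palettes
  have hABcard : ∀ J : Fin 7, (Aset c s J ∪ Bset b t J ∪ Eset a e).card
      ≤ (Aidx J).card * c + (Bidx J).card * b + a := by
    intro J
    have hA : (Aset c s J).card ≤ (Aidx J).card * c := by
      refine (Finset.card_biUnion_le).trans ?_
      calc ∑ i : Fin c, ((Aidx J).image (s i)).card
          ≤ ∑ _i : Fin c, (Aidx J).card :=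
            Finset.sum_le_sum fun i _ => Finset.card_image_le
        _ = (Aidx J).card * c := by rw [Finset.sum_const, card_univ, Fintype.card_fin,
            smul_eq_mul, mul_comm]
    have hB : (Bset b t J).card ≤ (Bidx J).card * b := by
      refine (Finset.card_biUnion_le).trans ?_
      calc ∑ i : Fin b, ((Bidx J).image (t i)).card
          ≤ ∑ _i : Fin b, (Bidx J).card :=
            Finset.sum_le_sum fun i _ => Finset.card_image_le
        _ = (Bidx J).card * b := by rw [Finset.sum_const, card_univ, Fintype.card_fin,
            smul_eq_mul, mul_comm]
    have hE : (Eset a e).card ≤ a := by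
      refine (Finset.card_image_le).trans ?_
      rw [card_univ, Fintype.card_fin]
    calc (Aset c s J ∪ Bset b t J ∪ Eset a e).card
        ≤ (Aset c s J ∪ Bset b t J).card + (Eset a e).card := Finset.card_union_le _ _
      _ ≤ (Aset c s J).card + (Bset b t J).card + (Eset a e).card := by
          have := Finset.card_union_le (Aset c s J) (Bset b t J); omega
      _ ≤ (Aidx J).card * c + (Bidx J).card * b + a := by
          have := hA; have := hB; have := hE; omega
  have hQ1c : Q1.card ≤ 3 * c + 2 * b + a := by
    have := hABcard 5
    have h3 : (Aidx (5 : Fin 7)).card = 3 := by decide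
    have h2' : (Bidx (5 : Fin 7)).card = 2 := by decide
    rw [h3, h2'] at this
    rw [hQ1]; exact this
  have hQ2c : Q2.card ≤ 3 * c + 2 * b + a := by
    have := hABcard 6
    have h3 : (Aidx (6 : Fin 7)).card = 3 := by decide
    have h2' : (Bidx (6 : Fin 7)).card = 2 := by decide
    rw [h3, h2'] at this
    rw [hQ2]; exact this
  -- E-avoidance helper: colours on a big part all lie in A∪B lists if no E colour is used
  -- the per-part lower bound
  have hlow : ∀ i' : Fin (a+1), 2 ≤ (U i' ∩ Q1).card + (U i' ∩ Q2).card := by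
    intro i'
    by_cases hE : ∃ z ∈ U i', z ∈ Eset a e
    · obtain ⟨z, hzU, hzE⟩ := hE
      have h1 : z ∈ U i' ∩ Q1 := mem_inter.2 ⟨hzU, by rw [hQ1]; exact mem_union_right _ hzE⟩
      have h2' : z ∈ U i' ∩ Q2 := mem_inter.2 ⟨hzU, by rw [hQ2]; exact mem_union_right _ hzE⟩
      have c1 := Finset.card_pos.2 ⟨z, h1⟩
      have c2 := Finset.card_pos.2 ⟨z, h2'⟩
      omega
    · push_neg at hE
      have hAB : ∀ j : Fin 5, φ (Sum.inl (i', j)) ∈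
          Aset c s (Fin.castLE (by norm_num) j) ∪ Bset b t (Fin.castLE (by norm_num) j) := by
        intro j
        rcases mem_union.1 (hmemU i' j) with h | h
        · exact h
        · exact absurd h (hE _ (by
            simp only [hU, mem_image, mem_univ, true_and]; exact ⟨j, rfl⟩))
      by_cases hc2 : 2 ≤ (U i').card
      · have hsplit : U i' ⊆ (U i' ∩ Q1) ∪ (U i' ∩ Q2) := by
          intro z hz
          rcases mem_union.1 (hUsub i' hz) with h | h
          · exact mem_union_left _ (mem_inter.2 ⟨hz, h⟩)
          · exact mem_union_right _ (mem_inter.2 ⟨hz, h⟩)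
        have := (Finset.card_le_card hsplit).trans (Finset.card_union_le _ _)
        omega
      · -- singleton part: impossible
        exfalso
        have hne : (U i').Nonempty := ⟨φ (Sum.inl (i', 0)), by
          simp only [hU, mem_image, mem_univ, true_and]; exact ⟨0, rfl⟩⟩
        have hc1 : (U i').card = 1 := by
          have := Finset.card_pos.2 hne; omega
        obtain ⟨z, hzeq⟩ := Finset.card_eq_one.1 hc1
        have hall : ∀ j : Fin 5, φ (Sum.inl (i', j)) = z := by
          intro j
          have : φ (Sum.inl (i', j)) ∈ U i' := by
            simp only [hU, mem_image, mem_univ, true_and]; exact ⟨j, rfl⟩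
          rw [hzeq] at this
          exact mem_singleton.1 this
        have hzU2 : z ∈ (Aset c s 5 ∪ Bset b t 5) ∪ (Aset c s 6 ∪ Bset b t 6) := by
          have hz0 := hAB 0
          rw [hall 0] at hz0
          rcases mem_union.1 hz0 with h | h
          · obtain ⟨i0, m0, hm0, rfl⟩ := mem_Aset'.1 h
            rcases mem_A56 m0 with h5 | h6
            · exact mem_union_left _ (mem_union_left _ (mem_Aset'.2 ⟨i0, m0, h5, rfl⟩))
            · exact mem_union_right _ (mem_union_left _ (mem_Aset'.2 ⟨i0, m0, h6, rfl⟩))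
          · obtain ⟨i0, q0, hq0, rfl⟩ := mem_Bset'.1 h
            rcases mem_B56 q0 with h5 | h6
            · exact mem_union_left _ (mem_union_right _ (mem_Bset'.2 ⟨i0, q0, h5, rfl⟩))
            · exact mem_union_right _ (mem_union_right _ (mem_Bset'.2 ⟨i0, q0, h6, rfl⟩))
        obtain ⟨x, hx⟩ := hkind z hzU2
        refine cover_single x fun j => hx j ?_
        have := hAB j
        rw [hall j] at this
        exact this
  -- arithmetic: tightness
  have hb1 : (∑ i' : Fin (a+1), (U i' ∩ Q1).card) + n ≤ Q1.card := hbud Q1 0 hmemV0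
  have hb2 : (∑ i' : Fin (a+1), (U i' ∩ Q2).card) + n ≤ Q2.card := hbud Q2 1 hmemV1
  have hsumlow : 2 * (a + 1) ≤
      ∑ i' : Fin (a+1), ((U i' ∩ Q1).card + (U i' ∩ Q2).card) := by
    calc 2 * (a + 1) = ∑ _i' : Fin (a+1), 2 := by
          rw [Finset.sum_const, card_univ, Fintype.card_fin, smul_eq_mul, mul_comm]
      _ ≤ _ := Finset.sum_le_sum fun i' _ => hlow i'
  have hsplitsum : ∑ i' : Fin (a+1), ((U i' ∩ Q1).card + (U i' ∩ Q2).card)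
      = (∑ i' : Fin (a+1), (U i' ∩ Q1).card) + ∑ i' : Fin (a+1), (U i' ∩ Q2).card :=
    Finset.sum_add_distrib
  have hws : (U i ∩ Q1).card + (U i ∩ Q2).card + 2 * a ≤
      ∑ i' : Fin (a+1), ((U i' ∩ Q1).card + (U i' ∩ Q2).card) := by
    have h1 : (∑ i' : Fin (a+1), ((U i' ∩ Q1).card + (U i' ∩ Q2).card))
        = ((U i ∩ Q1).card + (U i ∩ Q2).card)
          + ∑ i' ∈ univ.erase i, ((U i' ∩ Q1).card + (U i' ∩ Q2).card) :=
      (Finset.add_sum_erase _ (fun i' => (U i' ∩ Q1).card + (U i' ∩ Q2).card)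
        (mem_univ i)).symm
    have h2' : 2 * a ≤ ∑ i' ∈ univ.erase i, ((U i' ∩ Q1).card + (U i' ∩ Q2).card) := by
      calc 2 * a = ∑ _i' ∈ (univ : Finset (Fin (a+1))).erase i, 2 := by
            rw [Finset.sum_const, Finset.card_erase_of_mem (mem_univ i), card_univ,
              Fintype.card_fin, smul_eq_mul]
            simp [mul_comm]
        _ ≤ _ := Finset.sum_le_sum fun i' _ => hlow i'
    omega
  have hmi : (U i ∩ Q1).card + (U i ∩ Q2).card ≤ 2 := by omega
  -- U i has exactly two colours
  have hUi2 : (U i).card = 2 := h2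
  -- (U i ∩ Q1) ∪ (U i ∩ Q2) = U i, and the intersection is empty
  have hcup : (U i ∩ Q1) ∪ (U i ∩ Q2) = U i := by
    rw [← Finset.inter_union_distrib_left]
    exact Finset.inter_eq_left.2 (hUsub i)
  have hint0 : ((U i ∩ Q1) ∩ (U i ∩ Q2)).card = 0 := by
    have h := Finset.card_inter_add_card_union (U i ∩ Q1) (U i ∩ Q2)
    rw [hcup, hUi2] at h
    omega
  have hEdisj : ∀ z ∈ U i, z ∉ Eset a e := by
    intro z hz hzE
    have : z ∈ (U i ∩ Q1) ∩ (U i ∩ Q2) := by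
      refine mem_inter.2 ⟨mem_inter.2 ⟨hz, ?_⟩, mem_inter.2 ⟨hz, ?_⟩⟩
      · rw [hQ1]; exact mem_union_right _ hzE
      · rw [hQ2]; exact mem_union_right _ hzE
    rw [Finset.card_eq_zero] at hint0
    rw [hint0] at this
    exact absurd this (notMem_empty z)
  -- final covering contradiction
  show U i ⊆ Aset c s 5 ∪ Bset b t 5
  by_contra hcon
  obtain ⟨z2, hz2U, hz2P1⟩ : ∃ z2 ∈ U i, z2 ∉ Aset c s 5 ∪ Bset b t 5 := by
    by_contra h
    push_neg at h
    exact hcon h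
  -- z2 lies in A6 ∪ B6
  have hz2Q : z2 ∈ Aset c s 6 ∪ Bset b t 6 := by
    rcases mem_union.1 (hUsub i hz2U) with h | h
    · rw [hQ1] at h
      rcases mem_union.1 h with h | h
      · exact absurd h hz2P1
      · exact absurd h (hEdisj z2 hz2U)
    · rw [hQ2] at h
      rcases mem_union.1 h with h | h
      · exact h
      · exact absurd h (hEdisj z2 hz2U)
  -- kind of z2, with inP1b false
  have hx2 : ∃ x2 : Kind6, inP1b x2 = false ∧ ∀ j : Fin 5,
      z2 ∈ Aset c s (Fin.castLE (by norm_num) j) ∪ Bset b t (Fin.castLE (by norm_num) j) →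
        covb x2 j = true := by
    rcases mem_union.1 hz2Q with h | h
    · obtain ⟨i0, m0, hm0, rfl⟩ := mem_Aset'.1 h
      exact ⟨Sum.inl m0, notP1_s m0 hm0, fun j hj => decide_eq_true (hsA i0 m0 _ hj)⟩
    · obtain ⟨i0, q0, hq0, rfl⟩ := mem_Bset'.1 h
      exact ⟨Sum.inr q0, notP1_t q0 hq0, fun j hj => decide_eq_true (htB i0 q0 _ hj)⟩
  obtain ⟨x2, hx2P1, hx2cov⟩ := hx2
  -- the other colour z1
  obtain ⟨z1, hz1eq⟩ : ∃ z1, (U i).erase z2 = {z1} :=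
    Finset.card_eq_one.1 (by rw [Finset.card_erase_of_mem hz2U, hUi2])
  have hz1U : z1 ∈ U i :=
    (Finset.erase_subset _ _) (hz1eq ▸ mem_singleton_self z1)
  have hpairall : ∀ w ∈ U i, w = z2 ∨ w = z1 := by
    intro w hw
    by_cases hwz : w = z2
    · exact Or.inl hwz
    · right
      have : w ∈ (U i).erase z2 := Finset.mem_erase.2 ⟨hwz, hw⟩
      rw [hz1eq] at this
      exact mem_singleton.1 this
  -- kind of z1
  have hz1Q : z1 ∈ (Aset c s 5 ∪ Bset b t 5) ∪ (Aset c s 6 ∪ Bset b t 6) := by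
    rcases mem_union.1 (hUsub i hz1U) with h | h
    · rw [hQ1] at h
      rcases mem_union.1 h with h | h
      · exact mem_union_left _ h
      · exact absurd h (hEdisj z1 hz1U)
    · rw [hQ2] at h
      rcases mem_union.1 h with h | h
      · exact mem_union_right _ h
      · exact absurd h (hEdisj z1 hz1U)
  obtain ⟨x1, hx1cov⟩ := hkind z1 hz1Q
  refine cover_master x1 x2 (Or.inr hx2P1) ?_
  intro j
  have hφU : φ (Sum.inl (i, j)) ∈ U i := by
    simp only [hU, mem_image, mem_univ, true_and]; exact ⟨j, rfl⟩
  have hφAB : φ (Sum.inl (i, j)) ∈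
      Aset c s (Fin.castLE (by norm_num) j) ∪ Bset b t (Fin.castLE (by norm_num) j) := by
    rcases mem_union.1 (hmemU i j) with h | h
    · exact h
    · exact absurd h (hEdisj _ hφU)
  rcases hpairall _ hφU with hw | hw
  · rw [hw] at hφAB
    exact Or.inr (hx2cov j hφAB)
  · rw [hw] at hφAB
    exact Or.inl (hx1cov j hφAB)
end
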